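/- arXiv:2203.08908 — 2 statements merged into one kernel-verified Lean document; each statement's English description precedes it below -/
import Mathlib

section
/- Let p and q be Borel probability measures on ℝ^n. If D_W^{β1,β2}(p, q) = 0 for some finite β1, β2 > 0, then D_△(p, q) = 0; equivalently, supp(p) = supp(q). -/
open MeasureTheory Metric Set
open scoped ENNReal

noncomputable section

/-- The topological support of a Borel measure: the smallest closed set of full measure,
realized as the intersection of all closed sets whose complement is null. -/
def msupport {X : Type*} [TopologicalSpace X] [MeasurableSpace X] (μ : Measure X) : Set X :=
  ⋂₀ {S : Set X | IsClosed S ∧ μ Sᶜ = 0}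

/-- The symmetric support difference (SSD) divergence
`D_△(p, q) = ∫ d(x, supp q) dp + ∫ d(x, supp p) dq` (valued in `ℝ≥0∞`). -/
def Dtri {X : Type*} [MeasurableSpace X] [PseudoMetricSpace X] (p q : Measure X) : ℝ≥0∞ :=
  (∫⁻ x, ENNReal.ofReal (infDist x (msupport q)) ∂p) +
  (∫⁻ x, ENNReal.ofReal (infDist x (msupport p)) ∂q)

/-- The Wasserstein-1 distance: infimum of `∫ d(x, y) dγ` over couplings of `p` and `q`. -/
def DW {X : Type*} [MeasurableSpace X] [PseudoMetricSpace X] (p q : Measure X) : ℝ≥0∞ :=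
  ⨅ γ ∈ {γ : Measure (X × X) | γ.map Prod.fst = p ∧ γ.map Prod.snd = q},
    ∫⁻ z, ENNReal.ofReal (dist z.1 z.2) ∂γ

/-- The β-admissible Wasserstein distance: infimum of `∫ d(x, y) dγ` over measures `γ`
whose first marginal is `p` and whose second marginal is `≤ (1 + β) • q`. -/
def DWbeta {X : Type*} [MeasurableSpace X] [PseudoMetricSpace X]
    (β : ℝ) (p q : Measure X) : ℝ≥0∞ :=
  ⨅ γ ∈ {γ : Measure (X × X) |
      γ.map Prod.fst = p ∧ γ.map Prod.snd ≤ (ENNReal.ofReal (1 + β)) • q},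
    ∫⁻ z, ENNReal.ofReal (dist z.1 z.2) ∂γ

/-- The symmetrized (β₁, β₂)-admissible Wasserstein distance. -/
def DWsym {X : Type*} [MeasurableSpace X] [PseudoMetricSpace X]
    (β₁ β₂ : ℝ) (p q : Measure X) : ℝ≥0∞ :=
  DWbeta β₁ p q + DWbeta β₂ q p

lemma msupport_closed {X : Type*} [TopologicalSpace X] [MeasurableSpace X] (μ : Measure X) :
    IsClosed (msupport μ) :=
  isClosed_sInter (fun _ hS => hS.1)

lemma msupport_compl_null {X : Type*} [TopologicalSpace X] [MeasurableSpace X]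
    [SecondCountableTopology X] [OpensMeasurableSpace X] (μ : Measure X) :
    μ (msupport μ)ᶜ = 0 := by
  have hcompl : (msupport μ)ᶜ = ⋃₀ (compl '' {S : Set X | IsClosed S ∧ μ Sᶜ = 0}) := by
    simp [msupport, Set.compl_sInter, Set.sUnion_image]
  obtain ⟨T, hTc, hTsub, hTeq⟩ := TopologicalSpace.isOpen_sUnion_countable
    (compl '' {S : Set X | IsClosed S ∧ μ Sᶜ = 0})
    (by rintro s ⟨S, ⟨hS, -⟩, rfl⟩; exact hS.isOpen_compl)
  rw [hcompl, ← hTeq]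
  refine measure_sUnion_null_iff hTc |>.2 ?_
  intro s hs
  obtain ⟨S, ⟨-, hS0⟩, rfl⟩ := hTsub hs
  exact hS0

lemma subset_msupport {X : Type*} [TopologicalSpace X] [MeasurableSpace X]
    {μ : Measure X} {S : Set X} (h1 : IsClosed S) (h2 : μ Sᶜ = 0) :
    msupport μ ⊆ S :=
  Set.sInter_subset_of_mem ⟨h1, h2⟩

/-- **Proposition 4, part 2.** If the symmetrized (β₁, β₂)-admissible
Wasserstein distance vanishes for some finite β₁, β₂ > 0, then the SSD divergence vanishes,
i.e. the supports coincide. -/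
theorem relaxed_alignment_implies_support_alignment (n : ℕ)
    (p q : Measure (EuclideanSpace ℝ (Fin n)))
    [IsProbabilityMeasure p] [IsProbabilityMeasure q]
    (β₁ β₂ : ℝ) (hβ₁ : 0 < β₁) (hβ₂ : 0 < β₂)
    (h : DWsym β₁ β₂ p q = 0) :
    Dtri p q = 0 ∧ msupport p = msupport q := by
  classical
  -- key lemma: for any β and probability measures, the relaxed Wasserstein dominates
  -- the one-sided support distance integral
  have key : ∀ (β : ℝ) (μ ν : Measure (EuclideanSpace ℝ (Fin n))),
      (∫⁻ x, ENNReal.ofReal (infDist x (msupport ν)) ∂μ) ≤ DWbeta β μ ν := by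
    intro β μ ν
    refine le_iInf₂ fun γ hγ => ?_
    obtain ⟨hfst, hsnd⟩ := hγ
    -- γ-a.e., the second coordinate lies in msupport ν
    have hmeas : MeasurableSet ((msupport ν)ᶜ) :=
      (msupport_closed ν).isOpen_compl.measurableSet
    have hγsnd : γ (Prod.snd ⁻¹' (msupport ν)ᶜ) = 0 := by
      have := hsnd ((msupport ν)ᶜ)
      rw [Measure.map_apply measurable_snd hmeas] at this
      have hν : ν (msupport ν)ᶜ = 0 := msupport_compl_null ν
      have hle : γ (Prod.snd ⁻¹' (msupport ν)ᶜ) ≤ 0 := by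
        simpa [Measure.smul_apply, hν, msupport_compl_null] using this
      exact le_antisymm hle zero_le
    have hae : ∀ᵐ z ∂γ, z.2 ∈ msupport ν := by
      rw [MeasureTheory.ae_iff]
      exact hγsnd
    have hle : (∫⁻ z, ENNReal.ofReal (infDist z.1 (msupport ν)) ∂γ) ≤
        ∫⁻ z, ENNReal.ofReal (dist z.1 z.2) ∂γ := by
      refine lintegral_mono_ae ?_
      filter_upwards [hae] with z hz
      exact ENNReal.ofReal_le_ofReal (infDist_le_dist_of_mem hz)
    have heq : (∫⁻ z, ENNReal.ofReal (infDist z.1 (msupport ν)) ∂γ) =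
        ∫⁻ x, ENNReal.ofReal (infDist x (msupport ν)) ∂μ := by
      rw [← hfst, lintegral_map ?_ measurable_fst]
      exact ((continuous_infDist_pt (msupport ν)).measurable.ennreal_ofReal)
    rw [← heq]
    exact hle
  have h0 : DWbeta β₁ p q = 0 ∧ DWbeta β₂ q p = 0 := by
    rw [DWsym] at h
    exact add_eq_zero.1 h
  have hpq : (∫⁻ x, ENNReal.ofReal (infDist x (msupport q)) ∂p) = 0 :=
    le_antisymm (h0.1 ▸ key β₁ p q) zero_le
  have hqp : (∫⁻ x, ENNReal.ofReal (infDist x (msupport p)) ∂q) = 0 :=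
    le_antisymm (h0.2 ▸ key β₂ q p) zero_le
  have hDtri : Dtri p q = 0 := by simp [Dtri, hpq, hqp]
  -- support inclusion from vanishing integral
  have hsub : ∀ (μ ν : Measure (EuclideanSpace ℝ (Fin n))), IsProbabilityMeasure ν →
      (∫⁻ x, ENNReal.ofReal (infDist x (msupport ν)) ∂μ) = 0 →
      msupport μ ⊆ msupport ν := by
    intro μ ν hν hint
    have hne : (msupport ν).Nonempty := by
      by_contra hemp
      rw [Set.not_nonempty_iff_eq_empty] at hemp
      have := msupport_compl_null ν
      rw [hemp, Set.compl_empty] at this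
      simp [measure_univ] at this
    have hmeasf : Measurable fun x : EuclideanSpace ℝ (Fin n) =>
        ENNReal.ofReal (infDist x (msupport ν)) :=
      (continuous_infDist_pt (msupport ν)).measurable.ennreal_ofReal
    have hae : ∀ᵐ x ∂μ, ENNReal.ofReal (infDist x (msupport ν)) = 0 :=
      (lintegral_eq_zero_iff hmeasf).1 hint
    have hmem : ∀ᵐ x ∂μ, x ∈ msupport ν := by
      filter_upwards [hae] with x hx
      have h0' : infDist x (msupport ν) = 0 := by
        have := ENNReal.ofReal_eq_zero.1 hx
        exact le_antisymm this infDist_nonneg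
      exact ((IsClosed.mem_iff_infDist_zero (msupport_closed ν) hne).2 h0')
    have hnull : μ (msupport ν)ᶜ = 0 := MeasureTheory.ae_iff.1 hmem
    exact subset_msupport (msupport_closed ν) hnull
  exact ⟨hDtri, le_antisymm (hsub p q inferInstance hpq) (hsub q p inferInstance hqp)⟩
end
end

section
/- There exist Borel probability measures p and q on ℝ² such that supp(p) ≠ supp(q), yet for every θ ∈ ℝ² with ‖θ‖ = 1, the pushforward measures of p and q under the linear projection x ↦ ⟨θ, x⟩ have equal topological supports: supp((⟨θ, ·⟩)♯p) = supp((⟨θ, ·⟩)♯q). -/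
open MeasureTheory Metric Set
open scoped ENNReal

noncomputable section

open scoped RealInnerProductSpace

section Aux
variable {X : Type*} [TopologicalSpace X] [MeasurableSpace X]

lemma isClosed_msupport (μ : Measure X) : IsClosed (msupport μ) :=
  isClosed_sInter fun _ hS => hS.1

lemma measure_compl_msupport [SecondCountableTopology X] (μ : Measure X) :
    μ (msupport μ)ᶜ = 0 := by
  rw [msupport, Set.compl_sInter]
  obtain ⟨T, hTc, hTsub, hTeq⟩ := TopologicalSpace.isOpen_sUnion_countable
    (compl '' {S : Set X | IsClosed S ∧ μ Sᶜ = 0})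
    (by rintro s ⟨S, ⟨hS, -⟩, rfl⟩; exact hS.isOpen_compl)
  rw [← hTeq, measure_sUnion_null_iff hTc]
  intro t ht
  obtain ⟨S, ⟨-, hS0⟩, rfl⟩ := hTsub ht
  exact hS0

lemma msupport_map {Y : Type*} [TopologicalSpace Y] [MeasurableSpace Y]
    [OpensMeasurableSpace Y] [SecondCountableTopology X]
    (μ : Measure X) {f : X → Y} (hf : Continuous f) (hfm : Measurable f) :
    msupport (μ.map f) = closure (f '' msupport μ) := by
  apply Subset.antisymm
  · apply sInter_subset_of_mem
    refine ⟨isClosed_closure, ?_⟩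
    rw [Measure.map_apply hfm isClosed_closure.measurableSet.compl]
    refine measure_mono_null ?_ (measure_compl_msupport μ)
    intro x hx
    simp only [mem_preimage, mem_compl_iff] at hx ⊢
    exact fun hxs => hx (subset_closure (mem_image_of_mem f hxs))
  · refine closure_minimal ?_ (isClosed_msupport _)
    rintro y ⟨x, hx, rfl⟩
    intro S hS
    have hS' : μ (f ⁻¹' S)ᶜ = 0 := by
      have := hS.2
      rwa [Measure.map_apply hfm hS.1.measurableSet.compl] at this
    exact hx (f ⁻¹' S) ⟨hS.1.preimage hf, hS'⟩

lemma msupport_diracSum [T1Space X] [OpensMeasurableSpace X] (x : ℕ → X) :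
    msupport (Measure.sum fun n => (2 : ℝ≥0∞)⁻¹ ^ (n + 1) • Measure.dirac (x n))
      = closure (range x) := by
  have key : ∀ S : Set X, IsClosed S →
      ((Measure.sum fun n => (2 : ℝ≥0∞)⁻¹ ^ (n + 1) • Measure.dirac (x n)) Sᶜ = 0
        ↔ range x ⊆ S) := by
    intro S hS
    rw [Measure.sum_apply _ hS.measurableSet.compl, ENNReal.tsum_eq_zero]
    constructor
    · rintro h y ⟨n, rfl⟩
      have := h n
      rw [Measure.smul_apply, Measure.dirac_apply' _ hS.measurableSet.compl,
        smul_eq_mul, mul_eq_zero] at this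
      rcases this with h' | h'
      · exact absurd h' (by simp)
      · by_contra hxn
        simp [indicator_apply, hxn] at h'
    · intro h n
      rw [Measure.smul_apply, Measure.dirac_apply' _ hS.measurableSet.compl]
      have : x n ∈ S := h ⟨n, rfl⟩
      simp [indicator_apply, this]
  apply Subset.antisymm
  · apply sInter_subset_of_mem
    exact ⟨isClosed_closure, (key _ isClosed_closure).2 subset_closure⟩
  · refine closure_minimal ?_ (isClosed_msupport _)
    intro y hy S hS
    exact ((key S hS.1).1 hS.2) hy

lemma isProbability_diracSum [MeasurableSpace X] (x : ℕ → X) :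
    IsProbabilityMeasure
      (Measure.sum fun n => (2 : ℝ≥0∞)⁻¹ ^ (n + 1) • Measure.dirac (x n)) := by
  constructor
  rw [Measure.sum_apply _ MeasurableSet.univ]
  simp only [Measure.smul_apply, measure_univ, smul_eq_mul, mul_one]
  have : ∀ n : ℕ, (2 : ℝ≥0∞)⁻¹ ^ (n + 1) = 2⁻¹ * 2⁻¹ ^ n := fun n => by ring
  simp_rw [this]
  rw [ENNReal.tsum_mul_left, ENNReal.tsum_geometric, ENNReal.one_sub_inv_two,
    inv_inv]
  simp [ENNReal.inv_mul_cancel]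

end Aux
lemma icc_subset_image_sphere (θ : EuclideanSpace ℝ (Fin 2)) (hθ : ‖θ‖ = 1) :
    Icc (-1:ℝ) 1 ⊆ (fun x => ⟪θ, x⟫) '' sphere 0 1 := by
  intro t ht
  set s : ℝ := Real.sqrt (1 - t ^ 2) with hs
  have ht2 : (0:ℝ) ≤ 1 - t ^ 2 := by nlinarith [ht.1, ht.2]
  have hs2 : s ^ 2 = 1 - t ^ 2 := Real.sq_sqrt ht2
  set θp : EuclideanSpace ℝ (Fin 2) := (WithLp.equiv 2 (Fin 2 → ℝ)).symm ![-θ 1, θ 0] with hθp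
  have hsum : θ 0 * θ 0 + θ 1 * θ 1 = 1 := by
    have := real_inner_self_eq_norm_sq θ
    rw [hθ] at this
    simp only [PiLp.inner_apply, Fin.sum_univ_two, RCLike.inner_apply, conj_trivial] at this
    nlinarith [this]
  have hperp : ⟪θ, θp⟫ = 0 := by
    simp [PiLp.inner_apply, Fin.sum_univ_two, hθp, RCLike.inner_apply]
    ring
  have hθpn : ⟪θp, θp⟫ = 1 := by
    simp only [PiLp.inner_apply, Fin.sum_univ_two, hθp, RCLike.inner_apply, conj_trivial,
      WithLp.equiv_symm_apply, Matrix.cons_val_zero, Matrix.cons_val_one]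
    nlinarith [hsum]
  have hθθ : ⟪θ, θ⟫ = 1 := by rw [real_inner_self_eq_norm_sq, hθ]; norm_num
  refine ⟨t • θ + s • θp, ?_, ?_⟩
  · rw [mem_sphere_zero_iff_norm]
    have hvv : ⟪t • θ + s • θp, t • θ + s • θp⟫ = 1 := by
      rw [real_inner_add_add_self]
      rw [real_inner_smul_left, real_inner_smul_right, real_inner_smul_left,
        real_inner_smul_right, real_inner_smul_left, real_inner_smul_right]
      rw [hθθ, hperp, hθpn]
      nlinarith [hs2]
    have := real_inner_self_eq_norm_sq (t • θ + s • θp)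
    rw [hvv] at this
    nlinarith [norm_nonneg (t • θ + s • θp)]
  · simp only [inner_add_right, real_inner_smul_right, hθθ, hperp]
    ring

/-- **Proposition 7.** There are probability measures on ℝ² with different
supports whose 1D projections along every unit direction have equal supports. -/
theorem sliced_support_counterexample :
    ∃ p q : Measure (EuclideanSpace ℝ (Fin 2)),
      IsProbabilityMeasure p ∧ IsProbabilityMeasure q ∧
      msupport p ≠ msupport q ∧
      ∀ θ : EuclideanSpace ℝ (Fin 2), ‖θ‖ = 1 →
        msupport (p.map (fun x => ⟪θ, x⟫)) = msupport (q.map (fun x => ⟪θ, x⟫)) := by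
  set E := EuclideanSpace ℝ (Fin 2)
  have hSne : Nonempty ↥(sphere (0 : E) 1) := by
    refine ⟨⟨EuclideanSpace.single 0 (1:ℝ), ?_⟩⟩
    rw [mem_sphere_zero_iff_norm, EuclideanSpace.norm_single]; norm_num
  have hBne : Nonempty ↥(closedBall (0 : E) 1) := by
    exact ⟨⟨0, mem_closedBall_self zero_le_one⟩⟩
  set x : ℕ → E := fun n => ((TopologicalSpace.denseSeq ↥(sphere (0:E) 1)) n : E) with hx
  set y : ℕ → E := fun n => ((TopologicalSpace.denseSeq ↥(closedBall (0:E) 1)) n : E) with hy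
  set p := Measure.sum fun n => (2 : ℝ≥0∞)⁻¹ ^ (n + 1) • Measure.dirac (x n) with hp
  set q := Measure.sum fun n => (2 : ℝ≥0∞)⁻¹ ^ (n + 1) • Measure.dirac (y n) with hq
  have closRange : ∀ (A : Set E) (hA : IsClosed A) [Nonempty ↥A],
      closure (range fun n => ((TopologicalSpace.denseSeq ↥A) n : E)) = A := by
    intro A hA hne
    apply Subset.antisymm
    · exact closure_minimal (by rintro z ⟨n, rfl⟩; exact Subtype.coe_prop _) hA
    · have hdense : closure (range (TopologicalSpace.denseSeq ↥A)) = univ :=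
        (TopologicalSpace.denseRange_denseSeq ↥A).closure_range
      intro a ha
      have h1 : a ∈ Subtype.val '' closure (range (TopologicalSpace.denseSeq ↥A)) := by
        rw [hdense]; exact ⟨⟨a, ha⟩, mem_univ _, rfl⟩
      have h2 := image_closure_subset_closure_image
        (f := (Subtype.val : ↥A → E)) continuous_subtype_val
        (s := range (TopologicalSpace.denseSeq ↥A)) h1
      rwa [← range_comp] at h2
  have hmp : msupport p = sphere (0:E) 1 := by
    rw [hp, msupport_diracSum, hx, closRange _ isClosed_sphere]
  have hmq : msupport q = closedBall (0:E) 1 := by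
    rw [hq, msupport_diracSum, hy, closRange _ isClosed_closedBall]
  refine ⟨p, q, isProbability_diracSum x, isProbability_diracSum y, ?_, ?_⟩
  · rw [hmp, hmq]
    intro h
    have h0 : (0:E) ∈ sphere (0:E) 1 := by
      rw [h]; exact mem_closedBall_self zero_le_one
    rw [mem_sphere_zero_iff_norm, norm_zero] at h0
    norm_num at h0
  · intro θ hθ
    have hfc : Continuous (fun v : E => ⟪θ, v⟫) := continuous_const.inner continuous_id
    rw [msupport_map p hfc hfc.measurable, msupport_map q hfc hfc.measurable, hmp, hmq]
    have hBI : (fun v : E => ⟪θ, v⟫) '' closedBall 0 1 ⊆ Icc (-1:ℝ) 1 := by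
      rintro t ⟨v, hv, rfl⟩
      rw [mem_closedBall_zero_iff] at hv
      have := abs_real_inner_le_norm θ v
      rw [hθ, one_mul] at this
      exact abs_le.1 (this.trans hv)
    have hseq : (fun v : E => ⟪θ, v⟫) '' sphere 0 1 = Icc (-1:ℝ) 1 :=
      Subset.antisymm ((image_mono sphere_subset_closedBall).trans hBI)
        (icc_subset_image_sphere θ hθ)
    have hbeq : (fun v : E => ⟪θ, v⟫) '' closedBall 0 1 = Icc (-1:ℝ) 1 :=
      Subset.antisymm hBI (subset_trans (icc_subset_image_sphere θ hθ)
        (image_mono sphere_subset_closedBall))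
    rw [hseq, hbeq]
end
end
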